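/- arXiv:1711.05381 — 3 statements merged into one kernel-verified Lean document; each statement's English description precedes it below -/
import Mathlib

section
/- Let ν be a real-valued random variable with E[ν] = 0, σ² = E[ν²] < ∞, and v_κ = E[|ν|^κ] < ∞ for some κ > 2. Then for every τ > 0, |E[(ℓ'_τ(ν))²] − σ²| ≤ 2 v_κ / ((κ−2) τ^{κ−2}), where ℓ'_τ(u) = max(−τ, min(τ, u)). -/
open MeasureTheory Real

lemma clip_sq_le (u τ : ℝ) (hτ : 0 < τ) :
    (max (-τ) (min τ u)) ^ 2 ≤ u ^ 2 := by
  have h1 : max (-τ) (min τ u) ≤ |u| := by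
    rcases le_total (min τ u) (-τ) with h | h
    · rw [max_eq_left h]; linarith [abs_nonneg u]
    · rw [max_eq_right h]; exact le_trans (min_le_right _ _) (le_abs_self u)
  have h2 : -|u| ≤ max (-τ) (min τ u) :=
    le_max_of_le_right (le_min (by linarith [abs_nonneg u]) (neg_abs_le u))
  calc (max (-τ) (min τ u)) ^ 2 ≤ |u| ^ 2 := sq_le_sq' h2 h1
    _ = u ^ 2 := sq_abs u

lemma clip_sq_diff_le (u τ κ : ℝ) (hκ : 2 < κ) (hτ : 0 < τ) :
    u ^ 2 - (max (-τ) (min τ u)) ^ 2 ≤ 2 * |u| ^ κ / ((κ - 2) * τ ^ (κ - 2)) := by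
  have hden : (0:ℝ) < (κ - 2) * τ ^ (κ - 2) := by
    apply mul_pos (by linarith) (rpow_pos_of_pos hτ _)
  rcases le_or_gt |u| τ with hle | hgt
  · have hu1 : u ≤ τ := le_trans (le_abs_self u) hle
    have hu2 : -τ ≤ u := neg_le_of_abs_le hle
    rw [min_eq_right hu1, max_eq_right hu2]
    simp only [sub_self]
    positivity
  · -- clip² = τ²
    have hclip : (max (-τ) (min τ u)) ^ 2 = τ ^ 2 := by
      rcases lt_abs.mp hgt with h | h
      · rw [min_eq_left h.le, max_eq_right (by linarith)]
      · rw [min_eq_right (by linarith), max_eq_left (by linarith)]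
        ring
    rw [hclip]
    set x := |u| with hx
    have hxpos : 0 < x := lt_trans hτ hgt
    have hx2 : u ^ 2 = x ^ 2 := (sq_abs u).symm
    rw [hx2]
    -- Bernoulli
    have hb := one_add_mul_self_le_rpow_one_add
      (s := x ^ 2 / τ ^ 2 - 1) (by nlinarith [sq_nonneg x, sq_nonneg τ, div_nonneg (sq_nonneg x) (sq_nonneg τ)]) (p := κ / 2) (by linarith)
    have h1s : 1 + (x ^ 2 / τ ^ 2 - 1) = x ^ 2 / τ ^ 2 := by ring
    rw [h1s] at hb
    have hpow : (x ^ 2 / τ ^ 2) ^ (κ / 2) = x ^ κ / τ ^ κ := by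
      rw [div_rpow (sq_nonneg x) (sq_nonneg τ), ← rpow_natCast x 2, ← rpow_natCast τ 2,
        ← rpow_mul hxpos.le, ← rpow_mul hτ.le]
      push_cast
      rw [show (2:ℝ) * (κ/2) = κ by ring]
    rw [hpow] at hb
    -- hb : 1 + κ/2 * (x^2/τ^2 - 1) ≤ x^κ / τ^κ
    rw [le_div_iff₀ hden]
    have hτκ : τ ^ (κ - 2) * τ ^ (2:ℕ) = τ ^ κ := by
      rw [← rpow_natCast τ 2, ← rpow_add hτ]
      norm_num
    have hτκpos : (0:ℝ) < τ ^ κ := rpow_pos_of_pos hτ _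
    have h2 := mul_le_mul_of_nonneg_right hb hτκpos.le
    rw [div_mul_cancel₀ _ hτκpos.ne'] at h2
    have hτ2 : (0:ℝ) < τ ^ 2 := by positivity
    have hexp : (1 + κ / 2 * (x ^ 2 / τ ^ 2 - 1)) * τ ^ κ
        = τ ^ κ + κ / 2 * (x ^ 2 * (τ ^ κ / τ ^ 2) - τ ^ κ) := by
      field_simp
    rw [hexp] at h2
    have hdiv : τ ^ κ / τ ^ 2 = τ ^ (κ - 2) := by
      rw [div_eq_iff hτ2.ne']
      exact hτκ.symm
    rw [hdiv] at h2
    rw [← hτκ] at h2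
    have htpos : (0:ℝ) < τ ^ (κ - 2) := rpow_pos_of_pos hτ _
    nlinarith [h2, mul_nonneg (sq_nonneg x) htpos.le, mul_pos hτ2 htpos,
      mul_nonneg (sq_nonneg u) htpos.le]

theorem huber_score_second_moment {Ω : Type*} [MeasurableSpace Ω]
    (μ : Measure Ω) [IsProbabilityMeasure μ]
    (ν : Ω → ℝ) (κ τ : ℝ) (hκ : 2 < κ) (hτ : 0 < τ)
    (hmeas : Measurable ν) (hint : Integrable ν μ)
    (hmean : ∫ ω, ν ω ∂μ = 0)
    (h2int : Integrable (fun ω => (ν ω) ^ 2) μ)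
    (hκint : Integrable (fun ω => |ν ω| ^ κ) μ) :
    |(∫ ω, (max (-τ) (min τ (ν ω))) ^ 2 ∂μ) - ∫ ω, (ν ω) ^ 2 ∂μ|
      ≤ 2 * (∫ ω, |ν ω| ^ κ ∂μ) / ((κ - 2) * τ ^ (κ - 2)) := by
  have hle : ∀ ω, (max (-τ) (min τ (ν ω))) ^ 2 ≤ (ν ω) ^ 2 :=
    fun ω => clip_sq_le (ν ω) τ hτ
  have hcmeas : Measurable fun ω => (max (-τ) (min τ (ν ω))) ^ 2 :=
    (measurable_const.max (measurable_const.min hmeas)).pow_const 2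
  have hcint : Integrable (fun ω => (max (-τ) (min τ (ν ω))) ^ 2) μ := by
    refine h2int.mono hcmeas.aestronglyMeasurable (Filter.Eventually.of_forall fun ω => ?_)
    rw [Real.norm_eq_abs, Real.norm_eq_abs, abs_of_nonneg (sq_nonneg _),
      abs_of_nonneg (sq_nonneg _)]
    exact hle ω
  have hmono : (∫ ω, (max (-τ) (min τ (ν ω))) ^ 2 ∂μ) ≤ ∫ ω, (ν ω) ^ 2 ∂μ :=
    integral_mono hcint h2int hle
  rw [abs_sub_comm, abs_of_nonneg (by linarith)]
  have hsub : (∫ ω, (ν ω) ^ 2 ∂μ) - (∫ ω, (max (-τ) (min τ (ν ω))) ^ 2 ∂μ)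
      = ∫ ω, ((ν ω) ^ 2 - (max (-τ) (min τ (ν ω))) ^ 2) ∂μ :=
    (integral_sub h2int hcint).symm
  rw [hsub]
  have hbound : ∀ ω, (ν ω) ^ 2 - (max (-τ) (min τ (ν ω))) ^ 2
      ≤ |ν ω| ^ κ * (2 / ((κ - 2) * τ ^ (κ - 2))) := by
    intro ω
    have := clip_sq_diff_le (ν ω) τ κ hκ hτ
    calc (ν ω) ^ 2 - (max (-τ) (min τ (ν ω))) ^ 2
        ≤ 2 * |ν ω| ^ κ / ((κ - 2) * τ ^ (κ - 2)) := this
      _ = |ν ω| ^ κ * (2 / ((κ - 2) * τ ^ (κ - 2))) := by ring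
  calc (∫ ω, ((ν ω) ^ 2 - (max (-τ) (min τ (ν ω))) ^ 2) ∂μ)
      ≤ ∫ ω, |ν ω| ^ κ * (2 / ((κ - 2) * τ ^ (κ - 2))) ∂μ :=
        integral_mono (h2int.sub hcint) (hκint.mul_const _) hbound
    _ = (∫ ω, |ν ω| ^ κ ∂μ) * (2 / ((κ - 2) * τ ^ (κ - 2))) := integral_mul_const _ _
    _ = 2 * (∫ ω, |ν ω| ^ κ ∂μ) / ((κ - 2) * τ ^ (κ - 2)) := by ring
end

section
/- Let L : ℝ^d → ℝ be a convex differentiable function, and for β₁, β₂ ∈ ℝ^d define D_L(β₁, β₂) = L(β₁) − L(β₂) − ⟨∇L(β₂), β₁ − β₂⟩ and the symmetrized Bregman divergence D̄_L(β₁, β₂) = D_L(β₁, β₂) + D_L(β₂, β₁) = ⟨∇L(β₁) − ∇L(β₂), β₁ − β₂⟩. Then for any β, β* ∈ ℝ^d and η ∈ (0, 1], setting β_η = β* + η(β − β*), one has D̄_L(β_η, β*) ≤ η · D̄_L(β, β*). -/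
open scoped RealInnerProductSpace

private lemma first_order
    {E : Type*} [NormedAddCommGroup E] [InnerProductSpace ℝ E] [CompleteSpace E]
    (L : E → ℝ) (g : E → E)
    (hconv : ConvexOn ℝ Set.univ L)
    (hgrad : ∀ x, HasGradientAt L (g x) x)
    (x y : E) : L x + ⟪g x, y - x⟫ ≤ L y := by
  set φ : ℝ → ℝ := fun t => L (x + t • (y - x)) with hφdef
  have hline : HasDerivAt (fun t : ℝ => x + t • (y - x)) (y - x) (0 : ℝ) := by
    simpa using ((hasDerivAt_id (0:ℝ)).smul_const (y - x)).const_add x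
  have hφ : HasDerivAt φ ⟪g x, y - x⟫ 0 := by
    have hx : HasFDerivAt L ((InnerProductSpace.toDual ℝ E) (g x)) (x + (0:ℝ) • (y - x)) := by
      simpa using (hgrad x).hasFDerivAt
    have := hx.comp_hasDerivAt 0 hline
    simp [InnerProductSpace.toDual_apply_apply, real_inner_comm] at this
    exact this
  have hslope : Filter.Tendsto (slope φ 0) (nhdsWithin 0 (Set.Ioi 0)) (nhds ⟪g x, y - x⟫) :=
    (hasDerivAt_iff_tendsto_slope.mp hφ).mono_left
      (nhdsWithin_mono 0 (fun t ht => ne_of_gt ht))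
  have hbound : ∀ᶠ t in nhdsWithin (0:ℝ) (Set.Ioi 0), slope φ 0 t ≤ L y - L x := by
    filter_upwards [Ioo_mem_nhdsGT_of_mem (by norm_num : (0:ℝ) ∈ Set.Ico 0 1)] with t ht
    have ht0 : 0 < t := ht.1
    have ht1 : t < 1 := ht.2
    have hc : φ t ≤ (1 - t) * L x + t * L y := by
      have := hconv.2 (Set.mem_univ x) (Set.mem_univ y)
        (by linarith : (0:ℝ) ≤ 1 - t) (le_of_lt ht0) (by ring)
      have heq : (1 - t) • x + t • y = x + t • (y - x) := by
        simp [smul_sub, sub_smul]; abel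
      simpa [hφdef, heq, smul_eq_mul] using this
    have : slope φ 0 t = (φ t - φ 0) / t := by simp [slope_def_field, div_eq_mul_inv]
    rw [this, div_le_iff₀ ht0]
    have hφ0 : φ 0 = L x := by simp [hφdef]
    rw [hφ0]
    nlinarith
  have := le_of_tendsto hslope hbound
  linarith

theorem symmetrized_bregman_localization
    {E : Type*} [NormedAddCommGroup E] [InnerProductSpace ℝ E] [CompleteSpace E]
    (L : E → ℝ) (g : E → E)
    (hconv : ConvexOn ℝ Set.univ L)
    (hgrad : ∀ x, HasGradientAt L (g x) x)
    (β βs : E) (η : ℝ) (hη : η ∈ Set.Ioc (0 : ℝ) 1) :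
    ⟪g (βs + η • (β - βs)) - g βs, (βs + η • (β - βs)) - βs⟫
      ≤ η * ⟪g β - g βs, β - βs⟫ := by
  have mono : ∀ a b : E, 0 ≤ ⟪g a - g b, a - b⟫ := by
    intro a b
    have h1 := first_order L g hconv hgrad a b
    have h2 := first_order L g hconv hgrad b a
    have : ⟪g a, a - b⟫ - ⟪g b, a - b⟫ ≥ 0 := by
      have e1 : ⟪g a, b - a⟫ = -⟪g a, a - b⟫ := by
        rw [← inner_neg_right]; congr 1; abel
      rw [e1] at h1; linarith
    simpa [inner_sub_left] using this
  set βη := βs + η • (β - βs) with hβη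
  have hlhs : (⟪g βη - g βs, βη - βs⟫ : ℝ) = η * ⟪g βη - g βs, β - βs⟫ := by
    have : βη - βs = η • (β - βs) := by simp [hβη]
    rw [this, real_inner_smul_right]
  rw [hlhs]
  have key : ⟪g βη - g βs, β - βs⟫ ≤ ⟪g β - g βs, β - βs⟫ := by
    have hd : (⟪g β - g βs, β - βs⟫ : ℝ) - ⟪g βη - g βs, β - βs⟫ = ⟪g β - g βη, β - βs⟫ := by
      rw [← inner_sub_left]; congr 1; abel
    rcases eq_or_lt_of_le hη.2 with h1 | h1
    · have : βη = β := by rw [hβη, h1, one_smul]; abel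
      rw [this]
    · have hm := mono β βη
      have hβsub : β - βη = (1 - η) • (β - βs) := by
        rw [hβη]; rw [sub_smul, one_smul]; abel
      rw [hβsub, real_inner_smul_right] at hm
      have hpos : 0 < 1 - η := by linarith
      have : 0 ≤ ⟪g β - g βη, β - βs⟫ := nonneg_of_mul_nonneg_right hm hpos
      linarith
  exact mul_le_mul_of_nonneg_left key (le_of_lt hη.1)
end

section
/- Let G be a standard normal random variable, z ≥ 1, and 0 < δ < z. Then P(|G| ≥ z − δ) − P(|G| ≥ z) ≤ P(|G| ≥ z) · (1 + z) · δ · e^{zδ}. -/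
open MeasureTheory ProbabilityTheory Set Filter

lemma expInt (z : ℝ) : IntegrableOn (fun x : ℝ => Real.exp (-x^2/2)) (Set.Ioi z) := by
  have : Integrable (fun x : ℝ => Real.exp (-(1/2 : ℝ) * x^2)) :=
    integrable_exp_neg_mul_sq (by norm_num)
  have h : (fun x : ℝ => Real.exp (-x^2/2)) = fun x : ℝ => Real.exp (-(1/2 : ℝ) * x^2) := by
    ext x; ring_nf
  rw [h]
  exact this.integrableOn

lemma mills (z : ℝ) (hz : 0 < z) :
    z / (1 + z^2) * Real.exp (-z^2/2) ≤ ∫ x in Set.Ioi z, Real.exp (-x^2/2) := by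
  set g : ℝ → ℝ := fun t => t / (1 + t^2) * Real.exp (-t^2/2) with hg
  set g' : ℝ → ℝ := fun t => (1 - 2*t^2 - t^4) / (1 + t^2)^2 * Real.exp (-t^2/2) with hg'
  have hden : ∀ t : ℝ, (1 : ℝ) + t^2 ≠ 0 := fun t => by positivity
  have hderiv : ∀ t : ℝ, HasDerivAt g (g' t) t := by
    intro t
    have h1 : HasDerivAt (fun t : ℝ => t / (1 + t^2)) ((1 - t^2) / (1 + t^2)^2) t := by
      have := (hasDerivAt_id t).div ((hasDerivAt_const t (1:ℝ)).add
        ((hasDerivAt_pow 2 t))) (hden t)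
      refine this.congr_deriv ?_
      simp
      field_simp
      ring
    have h2 : HasDerivAt (fun t : ℝ => Real.exp (-t^2/2)) (-t * Real.exp (-t^2/2)) t := by
      have ht : HasDerivAt (fun t : ℝ => -t^2/2) (-t) t := by
        have := ((hasDerivAt_pow 2 t).neg).div_const 2
        refine this.congr_deriv ?_
        norm_num
        ring
      have := ht.exp
      convert this using 1
      ring
    have := h1.mul h2
    refine this.congr_deriv ?_
    simp only [hg']
    field_simp
    ring
  have hbound : ∀ t : ℝ, |g' t| ≤ Real.exp (-t^2/2) := by
    intro t
    simp only [hg', abs_mul, abs_of_pos (Real.exp_pos _)]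
    have h1 : |(1 - 2*t^2 - t^4) / (1 + t^2)^2| ≤ 1 := by
      rw [abs_div, abs_of_pos (by positivity : (0:ℝ) < (1 + t^2)^2), div_le_one (by positivity)]
      rw [abs_le]
      constructor <;> nlinarith [sq_nonneg t, sq_nonneg (t^2)]
    calc |(1 - 2*t^2 - t^4) / (1 + t^2)^2| * Real.exp (-t^2/2)
        ≤ 1 * Real.exp (-t^2/2) := by
          exact mul_le_mul_of_nonneg_right h1 (Real.exp_pos _).le
      _ = Real.exp (-t^2/2) := one_mul _
  have hcont : Continuous g' := by
    have h1 : Continuous fun t : ℝ => (1 - 2*t^2 - t^4) / (1 + t^2)^2 :=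
      Continuous.div (by fun_prop) (by fun_prop) (fun t => by positivity)
    have h2 : Continuous fun t : ℝ => Real.exp (-t^2/2) :=
      Real.continuous_exp.comp (by fun_prop)
    exact h1.mul h2
  have hg'int : IntegrableOn g' (Set.Ioi z) := by
    refine Integrable.mono (expInt z) hcont.aestronglyMeasurable.restrict ?_
    · filter_upwards with t
      rw [Real.norm_eq_abs, Real.norm_eq_abs, abs_of_pos (Real.exp_pos _)]
      exact hbound t
  have htend : Tendsto g atTop (nhds 0) := by
    have h1 : Tendsto (fun t : ℝ => Real.exp (-t^2/2)) atTop (nhds 0) := by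
      apply Real.tendsto_exp_atBot.comp
      apply Filter.Tendsto.atBot_div_const (by norm_num : (0:ℝ) < 2)
      exact tendsto_neg_atBot_iff.mpr (tendsto_pow_atTop (by norm_num))
    apply squeeze_zero' (g := fun t : ℝ => Real.exp (-t^2/2))
    · filter_upwards [eventually_gt_atTop 0] with t ht
      positivity
    · filter_upwards [eventually_gt_atTop 0] with t ht
      have : t / (1 + t^2) ≤ 1 := by
        rw [div_le_one (by positivity)]; nlinarith
      calc g t ≤ 1 * Real.exp (-t^2/2) :=
        mul_le_mul_of_nonneg_right this (Real.exp_pos _).le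
        _ = _ := one_mul _
    · exact h1
  have hFTC : ∫ t in Set.Ioi z, g' t = 0 - g z := by
    refine integral_Ioi_of_hasDerivAt_of_tendsto ((hderiv z).continuousAt.continuousWithinAt)
      (fun x _ => hderiv x) hg'int htend
  have hmono : ∫ t in Set.Ioi z, -g' t ≤ ∫ t in Set.Ioi z, Real.exp (-t^2/2) := by
    refine setIntegral_mono hg'int.neg (expInt z) ?_
    intro t
    have := hbound t
    rw [abs_le] at this
    linarith [this.1]
  rw [integral_neg, hFTC] at hmono
  simpa [hg] using hmono

noncomputable def gaussTail (z : ℝ) : ℝ := (gaussianReal 0 1 {x : ℝ | z ≤ |x|}).toReal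

lemma phi_eq (x : ℝ) :
    gaussianPDFReal 0 1 x = (Real.sqrt (2*Real.pi))⁻¹ * Real.exp (-x^2/2) := by
  simp [gaussianPDFReal]

lemma tail_eq (t : ℝ) (ht : 0 < t) :
    gaussTail t = 2 * ∫ x in Set.Ici t, gaussianPDFReal 0 1 x := by
  have hset : {x : ℝ | t ≤ |x|} = Set.Iic (-t) ∪ Set.Ici t := by
    ext x
    simp only [Set.mem_setOf_eq, Set.mem_union, Set.mem_Iic, Set.mem_Ici, le_abs, le_neg]
    tauto
  have hdisj : Disjoint (Set.Iic (-t)) (Set.Ici t) :=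
    Set.Iic_disjoint_Ici.2 (by linarith)
  have heven : ∫ x in Set.Iic (-t), gaussianPDFReal 0 1 x
      = ∫ x in Set.Ici t, gaussianPDFReal 0 1 x := by
    have h1 : ∫ x in Set.Iic (-t), gaussianPDFReal 0 1 x
        = ∫ x in Set.Iic (-t), gaussianPDFReal 0 1 (-x) := by
      apply setIntegral_congr_fun measurableSet_Iic
      intro x _
      simp [phi_eq]
    rw [h1, integral_comp_neg_Iic, neg_neg, ← integral_Ici_eq_integral_Ioi]
  rw [gaussTail, hset, measure_union hdisj measurableSet_Ici,
    ENNReal.toReal_add (measure_ne_top _ _) (measure_ne_top _ _),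
    gaussianReal_apply_eq_integral 0 one_ne_zero,
    gaussianReal_apply_eq_integral 0 one_ne_zero,
    ENNReal.toReal_ofReal (setIntegral_nonneg measurableSet_Iic
      (fun x _ => gaussianPDFReal_nonneg 0 1 x)),
    ENNReal.toReal_ofReal (setIntegral_nonneg measurableSet_Ici
      (fun x _ => gaussianPDFReal_nonneg 0 1 x)), heven]
  ring

theorem gaussian_tail_perturbation_lower (z δ : ℝ) (hz : 1 ≤ z) (hδ : 0 < δ) (hδz : δ < z) :
    gaussTail (z - δ) - gaussTail z
      ≤ gaussTail z * (1 + z) * δ * Real.exp (z * δ) := by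
  set c : ℝ := (Real.sqrt (2*Real.pi))⁻¹ with hc
  have hcpos : 0 < c := by rw [hc]; positivity
  set I : ℝ := ∫ x in Set.Ico (z-δ) z, gaussianPDFReal 0 1 x with hI
  set T : ℝ := ∫ x in Set.Ici z, gaussianPDFReal 0 1 x with hT
  have hzpos : (0:ℝ) < z := by linarith
  have hzd : 0 < z - δ := by linarith
  -- difference as integral over Ico
  have hsplit : Set.Ico (z-δ) z ∪ Set.Ici z = Set.Ici (z-δ) :=
    Set.Ico_union_Ici_eq_Ici (by linarith)
  have hdisj2 : Disjoint (Set.Ico (z-δ) z) (Set.Ici z) :=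
    Disjoint.mono_left Set.Ico_subset_Iio_self (Set.Iio_disjoint_Ici le_rfl)
  have hIdiff : gaussTail (z-δ) - gaussTail z = 2 * I := by
    rw [tail_eq _ hzd, tail_eq _ hzpos, ← hsplit,
      setIntegral_union hdisj2 measurableSet_Ici
        (integrable_gaussianPDFReal 0 1).integrableOn
        (integrable_gaussianPDFReal 0 1).integrableOn]
    ring
  -- upper bound on I
  have hIb : I ≤ δ * (c * Real.exp (-(z-δ)^2/2)) := by
    have h1 : I ≤ ∫ _x in Set.Ico (z-δ) z, (c * Real.exp (-(z-δ)^2/2)) := by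
      apply setIntegral_mono_on (integrable_gaussianPDFReal 0 1).integrableOn
        (integrableOn_const measure_Ico_lt_top.ne) measurableSet_Ico
      intro x hx
      rw [phi_eq, ← hc]
      have hx1 : z - δ ≤ x := hx.1
      gcongr

    rw [setIntegral_const, measureReal_def, Real.volume_Ico] at h1
    rw [ENNReal.toReal_ofReal (by linarith : (0:ℝ) ≤ z - (z-δ))] at h1
    calc I ≤ (z - (z-δ)) • (c * Real.exp (-(z-δ)^2/2)) := h1
      _ = δ * (c * Real.exp (-(z-δ)^2/2)) := by rw [smul_eq_mul]; ring_nf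
  -- lower bound on T
  have hTb : c * (z/(1+z^2) * Real.exp (-z^2/2)) ≤ T := by
    have : T = c * ∫ x in Set.Ioi z, Real.exp (-x^2/2) := by
      rw [hT, integral_Ici_eq_integral_Ioi]
      simp_rw [phi_eq]
      rw [integral_const_mul]
    rw [this]
    exact mul_le_mul_of_nonneg_left (mills z hzpos) hcpos.le
  have hTpos : 0 < T := lt_of_lt_of_le (by positivity) hTb
  -- key inequality
  have key : c * Real.exp (-z^2/2) ≤ T * (1+z) := by
    have h1 : c * z * Real.exp (-z^2/2) ≤ T * (1+z^2) := by
      have h := mul_le_mul_of_nonneg_right hTb (by positivity : (0:ℝ) ≤ 1+z^2)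
      calc c * z * Real.exp (-z^2/2)
          = c * (z/(1+z^2) * Real.exp (-z^2/2)) * (1+z^2) := by
            field_simp
        _ ≤ T * (1+z^2) := h
    have hz2 : 1 + z^2 ≤ z*(1+z) := by nlinarith
    have h2 : z * (c * Real.exp (-z^2/2)) ≤ z * (T*(1+z)) := by nlinarith
    exact le_of_mul_le_mul_left h2 hzpos
  have hexp : Real.exp (-(z-δ)^2/2) ≤ Real.exp (-z^2/2) * Real.exp (z*δ) := by
    rw [← Real.exp_add]
    apply Real.exp_le_exp.2
    nlinarith [sq_nonneg δ]
  rw [hIdiff]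
  calc 2 * I ≤ 2 * (δ * (c * Real.exp (-(z-δ)^2/2))) := by linarith
    _ ≤ 2 * (δ * (c * (Real.exp (-z^2/2) * Real.exp (z*δ)))) := by
        have := mul_le_mul_of_nonneg_left hexp hcpos.le
        nlinarith
    _ = 2 * δ * Real.exp (z*δ) * (c * Real.exp (-z^2/2)) := by ring
    _ ≤ 2 * δ * Real.exp (z*δ) * (T * (1+z)) := by
        apply mul_le_mul_of_nonneg_left key (by positivity)
    _ = (2 * T) * (1+z) * δ * Real.exp (z*δ) := by ring
    _ = gaussTail z * (1 + z) * δ * Real.exp (z * δ) := by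
        rw [tail_eq z hzpos, hT]
end
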